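/- Let y and z be probability distributions on n elements with ‖y - z‖_1 ≤ 1/2. Then |H_1(y) - H_1(z)| ≤ ‖y-z‖_1 · log(n / ‖y-z‖_1), where H_1 denotes Shannon entropy and ‖y-z‖_1 = ∑_i |y_i - z_i|. -/

import Mathlib

open Real Finset

-- subadditivity of negMulLog
lemma aux_negMulLog_add_le {b t : ℝ} (hb : 0 ≤ b) (ht : 0 ≤ t) :
    Real.negMulLog (b + t) ≤ Real.negMulLog b + Real.negMulLog t := by
  have h1 : b * Real.log b ≤ b * Real.log (b + t) := by
    rcases eq_or_lt_of_le hb with h | h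
    · simp [← h]
    · exact mul_le_mul_of_nonneg_left (Real.log_le_log h (by linarith)) hb
  have h2 : t * Real.log t ≤ t * Real.log (b + t) := by
    rcases eq_or_lt_of_le ht with h | h
    · simp [← h]
    · exact mul_le_mul_of_nonneg_left (Real.log_le_log h (by linarith)) ht
  simp only [Real.negMulLog, neg_mul]
  nlinarith [h1, h2]

-- lower-direction lemma via concavity trick
lemma aux_negMulLog_le_add {b t : ℝ} (hb : 0 ≤ b) (ht : 0 ≤ t) (hbt : b + t ≤ 1) :
    Real.negMulLog b ≤ Real.negMulLog (b + t) + Real.negMulLog (1 - t) := by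
  rcases eq_or_lt_of_le (show b ≤ 1 by linarith) with h | h
  · have ht0 : t = 0 := by linarith
    simp [h, ht0]
  · have h1b : 0 < 1 - b := by linarith
    set lam := (1 - b - t) / (1 - b) with hlam
    set mu := t / (1 - b) with hmu
    have hlam0 : 0 ≤ lam := div_nonneg (by linarith) h1b.le
    have hmu0 : 0 ≤ mu := div_nonneg ht h1b.le
    have hsum : lam + mu = 1 := by
      rw [hlam, hmu, ← add_div, div_eq_one_iff_eq h1b.ne']; ring
    have hb' : b ∈ Set.Ici (0:ℝ) := hb
    have h1' : (1:ℝ) ∈ Set.Ici (0:ℝ) := Set.mem_Ici.mpr zero_le_one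
    have c1 := Real.concaveOn_negMulLog.2 hb' h1' hlam0 (by linarith : (0:ℝ) ≤ 1 - lam) (by ring)
    have c2 := Real.concaveOn_negMulLog.2 hb' h1' hmu0 (by linarith : (0:ℝ) ≤ 1 - mu) (by ring)
    have e1 : lam • b + (1 - lam) • (1:ℝ) = b + t := by
      rw [smul_eq_mul, smul_eq_mul, hlam]; field_simp; ring
    have e2 : mu • b + (1 - mu) • (1:ℝ) = 1 - t := by
      rw [smul_eq_mul, smul_eq_mul, hmu]; field_simp; ring
    rw [e1] at c1; rw [e2] at c2
    simp only [smul_eq_mul, Real.negMulLog_one, mul_zero, add_zero] at c1 c2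
    have h3 : lam * Real.negMulLog b + mu * Real.negMulLog b = Real.negMulLog b := by
      rw [← add_mul, hsum, one_mul]
    linarith [c1, c2, h3]

-- concavity of t ↦ η t − η (1−t) on [0,1/2]
lemma aux_concave_g :
    ConcaveOn ℝ (Set.Icc (0:ℝ) (1/2))
      (fun x => Real.negMulLog x - Real.negMulLog (1 - x)) := by
  apply concaveOn_of_hasDerivWithinAt2_nonpos
    (f' := fun x => -Real.log x - Real.log (1 - x) - 2)
    (f'' := fun x => -x⁻¹ + (1 - x)⁻¹) (convex_Icc _ _)
  · exact (Real.continuous_negMulLog.sub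
      (Real.continuous_negMulLog.comp (continuous_const.sub continuous_id))).continuousOn
  · intro x hx
    rw [interior_Icc] at hx
    have hx0 : x ≠ 0 := ne_of_gt hx.1
    have hx1 : (1:ℝ) - x ≠ 0 := by have := hx.2; norm_num at this ⊢; linarith
    have h1 : HasDerivAt Real.negMulLog (-Real.log x - 1) x := Real.hasDerivAt_negMulLog hx0
    have h2 : HasDerivAt (fun y : ℝ => 1 - y) (-1) x := (hasDerivAt_id x).const_sub 1
    have h3 : HasDerivAt (fun y : ℝ => Real.negMulLog (1 - y))
        ((-Real.log (1 - x) - 1) * (-1)) x :=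
      (Real.hasDerivAt_negMulLog hx1).comp x h2
    have h4 := h1.sub h3
    have : -Real.log x - 1 - (-Real.log (1 - x) - 1) * (-1)
        = -Real.log x - Real.log (1 - x) - 2 := by ring
    rw [this] at h4
    exact h4.hasDerivWithinAt
  · intro x hx
    rw [interior_Icc] at hx
    have hx0 : x ≠ 0 := ne_of_gt hx.1
    have hx1 : (1:ℝ) - x ≠ 0 := by have := hx.2; norm_num at this ⊢; linarith
    have h1 : HasDerivAt Real.log x⁻¹ x := Real.hasDerivAt_log hx0
    have h2 : HasDerivAt (fun y : ℝ => 1 - y) (-1) x := (hasDerivAt_id x).const_sub 1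
    have h3 : HasDerivAt (fun y : ℝ => Real.log (1 - y)) ((1 - x)⁻¹ * (-1)) x :=
      (Real.hasDerivAt_log hx1).comp x h2
    have h4 := ((h1.neg).sub h3).sub_const 2
    have : -x⁻¹ - (1 - x)⁻¹ * (-1) = -x⁻¹ + (1 - x)⁻¹ := by ring
    rw [this] at h4
    exact h4.hasDerivWithinAt
  · intro x hx
    rw [interior_Icc] at hx
    have hx0 : 0 < x := hx.1
    have hxx : x < 1 - x := by have := hx.2; linarith
    have : (1 - x)⁻¹ ≤ x⁻¹ := by
      apply inv_anti₀ hx0 hxx.le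
    linarith

lemma aux_negMulLog_one_sub_le {t : ℝ} (ht : 0 ≤ t) (ht2 : t ≤ 1/2) :
    Real.negMulLog (1 - t) ≤ Real.negMulLog t := by
  have h0 : (0:ℝ) ∈ Set.Icc (0:ℝ) (1/2) := by norm_num
  have hh : (1/2:ℝ) ∈ Set.Icc (0:ℝ) (1/2) := by norm_num
  have := aux_concave_g.2 h0 hh (by linarith : (0:ℝ) ≤ 1 - 2*t)
    (by linarith : (0:ℝ) ≤ 2*t) (by ring)
  simp only [smul_eq_mul] at this
  rw [show ((1:ℝ) - 2*t) * 0 + 2*t*(1/2) = t from by ring] at this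
  have v1 : Real.negMulLog 0 - Real.negMulLog (1 - 0) = 0 := by norm_num
  have v2 : Real.negMulLog (1/2 : ℝ) - Real.negMulLog (1 - 1/2) = 0 := by norm_num
  rw [v1, v2] at this
  simp only [mul_zero, add_zero, zero_add] at this
  linarith

-- pointwise Fannes-type bound
lemma aux_abs_negMulLog_sub {a b : ℝ} (ha : 0 ≤ a) (ha1 : a ≤ 1) (hb : 0 ≤ b) (hb1 : b ≤ 1)
    (hab : |a - b| ≤ 1/2) :
    |Real.negMulLog a - Real.negMulLog b| ≤ Real.negMulLog |a - b| := by
  wlog h : b ≤ a generalizing a b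
  · have := this hb hb1 ha ha1 (by rwa [abs_sub_comm]) (le_of_not_ge h)
    rwa [abs_sub_comm (Real.negMulLog b), abs_sub_comm b] at this
  have ht : 0 ≤ a - b := by linarith
  rw [abs_of_nonneg ht] at hab ⊢
  rw [abs_le]
  constructor
  · have h1 : Real.negMulLog b ≤ Real.negMulLog a + Real.negMulLog (1 - (a - b)) := by
      have := aux_negMulLog_le_add hb ht (by linarith : b + (a - b) ≤ 1)
      simpa using this
    have h2 := aux_negMulLog_one_sub_le ht hab
    linarith
  · have := aux_negMulLog_add_le hb ht
    have e : b + (a - b) = a := by ring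
    rw [e] at this
    linarith

theorem entropy_l1_continuity (n : ℕ) (y z : Fin n → ℝ)
    (hy : ∀ i, 0 ≤ y i) (hz : ∀ i, 0 ≤ z i)
    (hys : ∑ i, y i = 1) (hzs : ∑ i, z i = 1)
    (hd : ∑ i, |y i - z i| ≤ 1 / 2) :
    |(-∑ i, y i * Real.log (y i)) - (-∑ i, z i * Real.log (z i))| ≤
      (∑ i, |y i - z i|) * Real.log ((n : ℝ) / ∑ i, |y i - z i|) := by
  have hδ0 : 0 ≤ ∑ i, |y i - z i| := Finset.sum_nonneg fun i _ => abs_nonneg _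
  have hy1 : ∀ i, y i ≤ 1 := by
    intro i
    have := Finset.single_le_sum (f := y) (fun j _ => hy j) (Finset.mem_univ i)
    linarith [hys ▸ this]
  have hz1 : ∀ i, z i ≤ 1 := by
    intro i
    have := Finset.single_le_sum (f := z) (fun j _ => hz j) (Finset.mem_univ i)
    linarith [hzs ▸ this]
  have hεδ : ∀ i, |y i - z i| ≤ 1/2 := by
    intro i
    have : |y i - z i| ≤ ∑ j, |y j - z j| :=
      Finset.single_le_sum (f := fun j => |y j - z j|) (fun j _ => abs_nonneg _)
        (Finset.mem_univ i)
    linarith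
  have habs : |(-∑ i, y i * Real.log (y i)) - (-∑ i, z i * Real.log (z i))| ≤
      ∑ i, Real.negMulLog |y i - z i| := by
    have he : (-∑ i, y i * Real.log (y i)) - (-∑ i, z i * Real.log (z i)) =
        ∑ i, (Real.negMulLog (y i) - Real.negMulLog (z i)) := by
      simp only [Real.negMulLog, neg_mul, Finset.sum_sub_distrib, Finset.sum_neg_distrib]
      try ring
    rw [he]
    refine (Finset.abs_sum_le_sum_abs _ _).trans (Finset.sum_le_sum fun i _ => ?_)
    exact aux_abs_negMulLog_sub (hy i) (hy1 i) (hz i) (hz1 i) (hεδ i)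
  rcases Nat.eq_zero_or_pos n with hn | hn
  · subst hn; simp at hys
  rcases eq_or_lt_of_le hδ0 with hδ | hδ
  · rw [← hδ, zero_mul]
    have hyz : ∀ i, y i = z i := by
      intro i
      have h1 : |y i - z i| ≤ 0 := by
        rw [hδ]
        exact Finset.single_le_sum (f := fun j => |y j - z j|) (fun j _ => abs_nonneg _)
          (Finset.mem_univ i)
      have := abs_nonneg (y i - z i)
      have : |y i - z i| = 0 := le_antisymm h1 this
      have := abs_eq_zero.mp this
      linarith [sub_eq_zero.mp this]
    simp only [hyz, sub_self, abs_zero, le_refl]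
  · -- Jensen step
    have hn' : (0:ℝ) < n := by exact_mod_cast hn
    have hw : ∑ _i : Fin n, (1/(n:ℝ)) = 1 := by
      simp [Finset.card_univ]
      field_simp
    have hjen := Real.concaveOn_negMulLog.le_map_sum (t := Finset.univ)
      (w := fun _ : Fin n => (1/(n:ℝ))) (p := fun i => |y i - z i|)
      (fun i _ => by positivity) hw (fun i _ => Set.mem_Ici.mpr (abs_nonneg _))
    simp only [smul_eq_mul] at hjen
    have hsum : ∑ i, (1/(n:ℝ)) * |y i - z i| = (∑ i, |y i - z i|) / n := by
      rw [← Finset.mul_sum]; ring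
    rw [hsum] at hjen
    have hmul : ∑ i, (1/(n:ℝ)) * Real.negMulLog |y i - z i|
        = (∑ i, Real.negMulLog |y i - z i|) / n := by
      rw [← Finset.mul_sum]; ring
    rw [hmul] at hjen
    have hkey : ∑ i, Real.negMulLog |y i - z i| ≤
        (∑ i, |y i - z i|) * Real.log ((n : ℝ) / ∑ i, |y i - z i|) := by
      have h1 : (∑ i, Real.negMulLog |y i - z i|) ≤ n * Real.negMulLog ((∑ i, |y i - z i|) / n) := by
        rw [div_le_iff₀ hn'] at hjen
        linarith [hjen]
      refine h1.trans (le_of_eq ?_)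
      rw [Real.negMulLog]
      rw [Real.log_div (ne_of_gt hδ) (ne_of_gt hn')]
      rw [Real.log_div (ne_of_gt hn') (ne_of_gt hδ)]
      field_simp [ne_of_gt hn']
      ring
    exact habs.trans hkey
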